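/- Let d ≥ 2 and p ≥ 3 be integers, and let A = (a_{ij}) and Z = (z_{ij}) be d×d real matrices such that every entry of A is strictly positive, z_{ij} ≥ a_{ij} for all i, j, and there is at least one pair (ī, j̄) with z_{īj̄} > a_{īj̄}. Set α = z_{īj̄} − a_{īj̄} > 0, m = min_{i,j} a_{ij}, and M = max_{i,j} a_{ij}. Then with K = 1 + α·d^{p−3}·m^{p−1}/(d^{p−1}·M^p) > 1, one has K·(A^p)_{ij} ≤ (Z^p)_{ij} for all i, j ∈ {1,…,d}. -/
import Mathlib

private lemma entries_nonneg_pow {d : ℕ} (A : Matrix (Fin d) (Fin d) ℝ)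
    (h : ∀ i j, 0 ≤ A i j) : ∀ n i j, 0 ≤ (A ^ n) i j := by
  intro n
  induction n with
  | zero => intro i j; simp [Matrix.one_apply]; positivity
  | succ n ih =>
      intro i j
      rw [pow_succ, Matrix.mul_apply]
      exact Finset.sum_nonneg fun k _ => mul_nonneg (ih i k) (h k j)

private lemma mul_entry_mono {d : ℕ} (B B' C C' : Matrix (Fin d) (Fin d) ℝ)
    (hB0 : ∀ i j, 0 ≤ B i j) (hC0 : ∀ i j, 0 ≤ C i j)
    (hB : ∀ i j, B i j ≤ B' i j) (hC : ∀ i j, C i j ≤ C' i j) :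
    ∀ i j, (B * C) i j ≤ (B' * C') i j := by
  intro i j
  rw [Matrix.mul_apply, Matrix.mul_apply]
  refine Finset.sum_le_sum fun k _ => ?_
  exact mul_le_mul (hB i k) (hC k j) (hC0 k j) (le_trans (hB0 i k) (hB i k))

private lemma pow_entry_mono {d : ℕ} (B C : Matrix (Fin d) (Fin d) ℝ)
    (hB0 : ∀ i j, 0 ≤ B i j) (hBC : ∀ i j, B i j ≤ C i j) :
    ∀ n i j, (B ^ n) i j ≤ (C ^ n) i j := by
  intro n
  induction n with
  | zero => intro i j; simp
  | succ n ih =>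
      intro i j
      rw [pow_succ, pow_succ]
      exact mul_entry_mono _ _ _ _ (entries_nonneg_pow B hB0 n) hB0 ih hBC i j

private lemma pow_entry_lb {d : ℕ} (A : Matrix (Fin d) (Fin d) ℝ) (m : ℝ)
    (hm0 : 0 ≤ m) (hm : ∀ i j, m ≤ A i j) :
    ∀ n i j, (d : ℝ) ^ n * m ^ (n + 1) ≤ (A ^ (n + 1)) i j := by
  intro n
  induction n with
  | zero => intro i j; simpa using hm i j
  | succ n ih =>
      intro i j
      rw [pow_succ A, Matrix.mul_apply]
      have key : ∀ k : Fin d, (d : ℝ) ^ n * m ^ (n + 1) * m ≤ (A ^ (n + 1)) i k * A k j := by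
        intro k
        refine mul_le_mul (ih i k) (hm k j) hm0 ?_
        exact le_trans (by positivity) (ih i k)
      calc (d : ℝ) ^ (n + 1) * m ^ (n + 1 + 1)
          = ∑ _k : Fin d, (d : ℝ) ^ n * m ^ (n + 1) * m := by
            simp [Finset.sum_const]; ring
        _ ≤ ∑ k : Fin d, (A ^ (n + 1)) i k * A k j :=
            Finset.sum_le_sum fun k _ => key k

private lemma pow_entry_ub {d : ℕ} (A : Matrix (Fin d) (Fin d) ℝ) (M : ℝ)
    (h0 : ∀ i j, 0 ≤ A i j) (hM0 : 0 ≤ M) (hM : ∀ i j, A i j ≤ M) :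
    ∀ n i j, (A ^ (n + 1)) i j ≤ (d : ℝ) ^ n * M ^ (n + 1) := by
  intro n
  induction n with
  | zero => intro i j; simpa using hM i j
  | succ n ih =>
      intro i j
      rw [pow_succ A, Matrix.mul_apply]
      calc ∑ k : Fin d, (A ^ (n + 1)) i k * A k j
          ≤ ∑ _k : Fin d, (d : ℝ) ^ n * M ^ (n + 1) * M :=
            Finset.sum_le_sum fun k _ =>
              mul_le_mul (ih i k) (hM k j) (h0 k j) (by positivity)
        _ = (d : ℝ) ^ (n + 1) * M ^ (n + 1 + 1) := by
            simp [Finset.sum_const]; ring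

theorem power_entry_domination (d p : ℕ) (hd : 2 ≤ d) (hp : 3 ≤ p)
    (A Z : Matrix (Fin d) (Fin d) ℝ)
    (hApos : ∀ i j, 0 < A i j)
    (hAZ : ∀ i j, A i j ≤ Z i j)
    (ibar jbar : Fin d) (hstrict : A ibar jbar < Z ibar jbar)
    (α m M K : ℝ)
    (hα : α = Z ibar jbar - A ibar jbar)
    (hm : m = Finset.univ.inf'
      (Finset.univ_nonempty_iff.mpr ⟨(ibar, jbar)⟩ : (Finset.univ : Finset (Fin d × Fin d)).Nonempty)
      (fun q : Fin d × Fin d => A q.1 q.2))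
    (hM : M = Finset.univ.sup'
      (Finset.univ_nonempty_iff.mpr ⟨(ibar, jbar)⟩ : (Finset.univ : Finset (Fin d × Fin d)).Nonempty)
      (fun q : Fin d × Fin d => A q.1 q.2))
    (hK : K = 1 + α * (d : ℝ) ^ (p - 3) * m ^ (p - 1) / ((d : ℝ) ^ (p - 1) * M ^ p)) :
    1 < K ∧ ∀ i j, K * (A ^ p) i j ≤ (Z ^ p) i j := by
  obtain ⟨q, rfl⟩ : ∃ q, p = q + 3 := ⟨p - 3, by omega⟩
  have hq3 : q + 3 - 3 = q := by omega
  have hq1 : q + 3 - 1 = q + 2 := by omega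
  rw [hq3, hq1] at hK
  -- basic positivity facts
  have hmle : ∀ i j, m ≤ A i j := fun i j => hm ▸ Finset.inf'_le (fun q : Fin d × Fin d => A q.1 q.2) (Finset.mem_univ (i, j))
  have hMge : ∀ i j, A i j ≤ M := fun i j => hM ▸ Finset.le_sup' (fun q : Fin d × Fin d => A q.1 q.2) (Finset.mem_univ (i, j))
  have hm0 : 0 < m := by
    rw [hm, Finset.lt_inf'_iff]
    exact fun b _ => hApos b.1 b.2
  have hM0 : 0 < M := lt_of_lt_of_le hm0 (le_trans (hmle ibar jbar) (hMge ibar jbar))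
  have hα0 : 0 < α := by rw [hα]; linarith
  have hd0 : (0 : ℝ) < d := by
    have : (0:ℕ) < d := by omega
    exact_mod_cast this
  have hA0 : ∀ i j, 0 ≤ A i j := fun i j => (hApos i j).le
  -- the perturbation matrix
  set E : Matrix (Fin d) (Fin d) ℝ :=
    Matrix.of (fun l k => if l = ibar then (if k = jbar then α else 0) else 0) with hE
  have hE0 : ∀ i j, 0 ≤ E i j := by
    intro i j; simp only [hE, Matrix.of_apply]
    by_cases h1 : i = ibar <;> by_cases h2 : j = jbar <;> simp [h1, h2, hα0.le]
  have hAE0 : ∀ i j, 0 ≤ (A + E) i j := fun i j =>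
    add_nonneg (hA0 i j) (hE0 i j)
  have hAEZ : ∀ i j, (A + E) i j ≤ Z i j := by
    intro i j
    simp only [Matrix.add_apply, hE, Matrix.of_apply]
    by_cases h1 : i = ibar
    · by_cases h2 : j = jbar
      · subst h1; subst h2; simp [hα]
      · simp [h1, h2]; exact hAZ _ _
    · simp [h1, hAZ i j]
  -- key entrywise lower bound on (A+E)^(q+3)
  have hsplit : ∀ i j, (A ^ (q + 3)) i j + (A * E * A ^ (q + 1)) i j
      ≤ ((A + E) ^ (q + 3)) i j := by
    intro i j
    have step1 : ∀ i j, (A * A + A * E) i j ≤ ((A + E) * (A + E)) i j := by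
      intro i j
      have expand : (A + E) * (A + E) = A * A + A * E + (E * A + E * E) := by
        noncomm_ring
      rw [expand]
      simp only [Matrix.add_apply]
      have h1 : 0 ≤ (E * A) i j := by
        rw [Matrix.mul_apply]
        exact Finset.sum_nonneg fun k _ => mul_nonneg (hE0 i k) (hA0 k j)
      have h2 : 0 ≤ (E * E) i j := by
        rw [Matrix.mul_apply]
        exact Finset.sum_nonneg fun k _ => mul_nonneg (hE0 i k) (hE0 k j)
      linarith
    have step2 : ∀ i j, ((A * A + A * E) * A ^ (q + 1)) i j
        ≤ (((A + E) * (A + E)) * (A + E) ^ (q + 1)) i j := by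
      refine mul_entry_mono _ _ _ _ ?_ (entries_nonneg_pow A hA0 (q + 1)) step1
        (pow_entry_mono A (A + E) hA0 (fun i j => le_add_of_nonneg_right (hE0 i j)) (q + 1))
      intro i j
      simp only [Matrix.add_apply]
      refine add_nonneg ?_ ?_
      · rw [Matrix.mul_apply]
        exact Finset.sum_nonneg fun k _ => mul_nonneg (hA0 i k) (hA0 k j)
      · rw [Matrix.mul_apply]
        exact Finset.sum_nonneg fun k _ => mul_nonneg (hA0 i k) (hE0 k j)
    have eq1 : (A * A + A * E) * A ^ (q + 1) = A ^ (q + 3) + A * E * A ^ (q + 1) := by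
      rw [add_mul]
      congr 1
      rw [mul_assoc, ← pow_succ', ← pow_succ']
    have eq2 : ((A + E) * (A + E)) * (A + E) ^ (q + 1) = (A + E) ^ (q + 3) := by
      rw [mul_assoc, ← pow_succ', ← pow_succ']
    have := step2 i j
    rw [eq1, eq2] at this
    simpa [Matrix.add_apply] using this
  -- lower bound on the perturbation term
  have hpert : ∀ i j, α * (d : ℝ) ^ q * m ^ (q + 2) ≤ (A * E * A ^ (q + 1)) i j := by
    intro i j
    have hAEik : ∀ k, (A * E) i k = if k = jbar then A i ibar * α else 0 := by
      intro k
      rw [Matrix.mul_apply]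
      simp only [hE, Matrix.of_apply, mul_ite, mul_zero]
      by_cases hk : k = jbar
      · simp [hk]
      · simp [hk]
    rw [Matrix.mul_apply]
    have hterm : ∀ k : Fin d, 0 ≤ (A * E) i k * (A ^ (q + 1)) k j := by
      intro k
      refine mul_nonneg ?_ (entries_nonneg_pow A hA0 (q + 1) k j)
      rw [hAEik k]
      split
      · exact mul_nonneg (hA0 i ibar) hα0.le
      · exact le_refl 0
    have hsingle : (A * E) i jbar * (A ^ (q + 1)) jbar j
        ≤ ∑ k : Fin d, (A * E) i k * (A ^ (q + 1)) k j :=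
      Finset.single_le_sum (fun k _ => hterm k) (Finset.mem_univ jbar)
    refine le_trans ?_ hsingle
    rw [hAEik jbar]
    simp only [if_pos rfl]
    have h1 : m * α ≤ A i ibar * α :=
      mul_le_mul_of_nonneg_right (hmle i ibar) hα0.le
    have h2 : (d : ℝ) ^ q * m ^ (q + 1) ≤ (A ^ (q + 1)) jbar j :=
      pow_entry_lb A m hm0.le hmle q jbar j
    calc α * (d : ℝ) ^ q * m ^ (q + 2)
        = (m * α) * ((d : ℝ) ^ q * m ^ (q + 1)) := by ring
      _ ≤ (A i ibar * α) * ((A ^ (q + 1)) jbar j) := by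
          refine mul_le_mul h1 h2 (by positivity) ?_
          exact le_trans (by positivity) h1
  -- main lower bound for Z^p
  have hZlb : ∀ i j, (A ^ (q + 3)) i j + α * (d : ℝ) ^ q * m ^ (q + 2)
      ≤ (Z ^ (q + 3)) i j := by
    intro i j
    have h1 := hsplit i j
    have h2 := hpert i j
    have h3 := pow_entry_mono (A + E) Z hAE0 hAEZ (q + 3) i j
    linarith
  -- upper bound on A^p entries
  have hAub : ∀ i j, (A ^ (q + 3)) i j ≤ (d : ℝ) ^ (q + 2) * M ^ (q + 3) :=
    fun i j => pow_entry_ub A M hA0 hM0.le hMge (q + 2) i j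
  have hc0 : 0 < α * (d : ℝ) ^ q * m ^ (q + 2) / ((d : ℝ) ^ (q + 2) * M ^ (q + 3)) := by
    positivity
  constructor
  · rw [hK]; linarith
  · intro i j
    set c := α * (d : ℝ) ^ q * m ^ (q + 2) / ((d : ℝ) ^ (q + 2) * M ^ (q + 3)) with hc
    have hKc : K = 1 + c := hK
    have hAnn : 0 ≤ (A ^ (q + 3)) i j := entries_nonneg_pow A hA0 (q + 3) i j
    have hcA : c * (A ^ (q + 3)) i j ≤ α * (d : ℝ) ^ q * m ^ (q + 2) := by
      have h1 : c * (A ^ (q + 3)) i j ≤ c * ((d : ℝ) ^ (q + 2) * M ^ (q + 3)) :=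
        mul_le_mul_of_nonneg_left (hAub i j) hc0.le
      have h2 : c * ((d : ℝ) ^ (q + 2) * M ^ (q + 3)) = α * (d : ℝ) ^ q * m ^ (q + 2) := by
        rw [hc]
        field_simp
      linarith
    have := hZlb i j
    rw [hKc]
    nlinarith [this, hcA]
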